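/- Let G_n^m(x) = Σ_{s≥0} |D_n^m(s)| x^{(s-n)/2} (as a formal power series, summing over s with s ≡ n mod 2), where D_n^m(s) is the set of Dyck paths from (0,0) to (s,n) that never go above the line y = m. Then for 0 ≤ n ≤ m, G_n^m(x) · p_{m+1}(x) = p_{m-n}(x), where p_k(x) = Σ_{s=0}^{⌊k/2⌋} (-1)^s C(k-s,s) x^s. -/

import Mathlib

def IsDyckWord (w : List Bool) : Prop :=
  ∀ p : List Bool, p <+: w → p.count false ≤ p.count true

def EndsAt (w : List Bool) (n : ℕ) : Prop :=
  w.count true = w.count false + n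

/-- The path never goes above the line `y = m`. -/
def BoundedBy (w : List Bool) (m : ℕ) : Prop :=
  ∀ p : List Bool, p <+: w → p.count true ≤ p.count false + m

/-- `p_k` as a power series: `p_k(x) = Σ_{s=0}^{⌊k/2⌋} (-1)^s C(k-s,s) x^s`. -/
noncomputable def pSeries (k : ℕ) : PowerSeries ℤ :=
  PowerSeries.mk fun s => if s ≤ k / 2 then (-1) ^ s * ((k - s).choose s : ℤ) else 0

/-- The generating series `G_n^m(x) = Σ_j |D_n^m(n+2j)| x^j` of Dyck paths
ending at height `n` and bounded above by `y = m`. -/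
noncomputable def G (m n : ℕ) : PowerSeries ℤ :=
  PowerSeries.mk fun j =>
    ({w : List Bool | IsDyckWord w ∧ w.length = n + 2 * j ∧ EndsAt w n ∧
        BoundedBy w m}.ncard : ℤ)

namespace Stmt7Aux

open PowerSeries

/-- The set of bounded Dyck paths counted by the `j`-th coefficient of `G m n`. -/
def S (m n j : ℕ) : Set (List Bool) :=
  {w | IsDyckWord w ∧ w.length = n + 2 * j ∧ EndsAt w n ∧ BoundedBy w m}

lemma S_finite (m n j : ℕ) : (S m n j).Finite :=
  (List.finite_length_eq Bool (n + 2 * j)).subset fun _ hw => hw.2.1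

lemma coeff_G (m n j : ℕ) : PowerSeries.coeff j (G m n) = ((S m n j).ncard : ℤ) := by
  simp [G, S, PowerSeries.coeff_mk]

lemma prefix_concat_iff {p w : List Bool} {b : Bool} :
    p <+: w ++ [b] ↔ p <+: w ∨ p = w ++ [b] := by
  constructor
  · rintro ⟨t, ht⟩
    rcases t.eq_nil_or_concat with rfl | ⟨t', c, rfl⟩
    · right; simpa using ht
    · left
      rw [List.concat_eq_append, ← List.append_assoc] at ht
      exact ⟨t', (List.append_inj' ht rfl).1⟩
  · rintro (h | rfl)
    · exact h.trans (List.prefix_append _ _)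
    · exact List.prefix_refl _

lemma dyck_concat {w : List Bool} {b : Bool} :
    IsDyckWord (w ++ [b]) ↔
      IsDyckWord w ∧ (w ++ [b]).count false ≤ (w ++ [b]).count true := by
  constructor
  · intro h
    exact ⟨fun p hp => h p (hp.trans (List.prefix_append _ _)), h _ (List.prefix_refl _)⟩
  · rintro ⟨h1, h2⟩ p hp
    rcases prefix_concat_iff.1 hp with hp | rfl
    · exact h1 p hp
    · exact h2

lemma bounded_concat {w : List Bool} {b : Bool} {m : ℕ} :
    BoundedBy (w ++ [b]) m ↔
      BoundedBy w m ∧ (w ++ [b]).count true ≤ (w ++ [b]).count false + m := by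
  constructor
  · intro h
    exact ⟨fun p hp => h p (hp.trans (List.prefix_append _ _)), h _ (List.prefix_refl _)⟩
  · rintro ⟨h1, h2⟩ p hp
    rcases prefix_concat_iff.1 hp with hp | rfl
    · exact h1 p hp
    · exact h2

lemma concat_false_mem {m n j : ℕ} {w : List Bool} :
    w ++ [false] ∈ S m n (j + 1) ↔ w ∈ S m (n + 1) j := by
  have hct : (w ++ [false]).count true = w.count true := by simp
  have hcf : (w ++ [false]).count false = w.count false + 1 := by simp
  constructor
  · rintro ⟨hd, hl, he, hb⟩
    rw [dyck_concat] at hd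
    rw [bounded_concat] at hb
    refine ⟨hd.1, by simp at hl; omega, ?_, hb.1⟩
    unfold EndsAt at he ⊢
    omega
  · rintro ⟨hd, hl, he, hb⟩
    unfold EndsAt at he
    refine ⟨dyck_concat.2 ⟨hd, by omega⟩, by simp; omega, ?_, ?_⟩
    · unfold EndsAt; omega
    · refine bounded_concat.2 ⟨hb, ?_⟩
      have := hb w (List.prefix_refl w)
      omega

lemma concat_true_mem {m n j : ℕ} {w : List Bool} (hm : n + 1 ≤ m) :
    w ++ [true] ∈ S m (n + 1) j ↔ w ∈ S m n j := by
  have hct : (w ++ [true]).count true = w.count true + 1 := by simp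
  have hcf : (w ++ [true]).count false = w.count false := by simp
  constructor
  · rintro ⟨hd, hl, he, hb⟩
    rw [dyck_concat] at hd
    rw [bounded_concat] at hb
    refine ⟨hd.1, by simp at hl; omega, ?_, hb.1⟩
    unfold EndsAt at he ⊢
    omega
  · rintro ⟨hd, hl, he, hb⟩
    unfold EndsAt at he
    refine ⟨?_, by simp; omega, ?_, ?_⟩
    · refine dyck_concat.2 ⟨hd, ?_⟩
      have := hd w (List.prefix_refl w)
      omega
    · unfold EndsAt; omega
    · exact bounded_concat.2 ⟨hb, by omega⟩

lemma S_empty {m n : ℕ} (h : m < n) (j : ℕ) : S m n j = ∅ := by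
  ext w
  simp only [S, Set.mem_setOf_eq, Set.mem_empty_iff_false, iff_false, not_and]
  intro _ _ he hb
  have := hb w (List.prefix_refl w)
  unfold EndsAt at he
  omega

lemma S_card_zero {m n : ℕ} (h : n ≤ m) : S m n 0 = {List.replicate n true} := by
  ext w
  simp only [S, Set.mem_setOf_eq, Set.mem_singleton_iff]
  constructor
  · rintro ⟨hd, hl, he, hb⟩
    have h1 : w.count true ≤ w.length := List.count_le_length
    unfold EndsAt at he
    rw [List.eq_replicate_iff]
    refine ⟨by omega, fun b hb' => ?_⟩
    have h2 : w.count true = w.length := by omega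
    exact ((List.count_eq_length.1 h2) b hb').symm
  · rintro rfl
    have hct : (List.replicate n true).count true = n := by simp
    have hcf : (List.replicate n true).count false = 0 := by simp [List.count_replicate]
    refine ⟨?_, by simp, ?_, ?_⟩
    · intro p hp
      have h1 : p.count false ≤ (List.replicate n true).count false :=
        hp.sublist.count_le _
      omega
    · unfold EndsAt; omega
    · intro p hp
      have h1 : p.count true ≤ (List.replicate n true).count true :=
        hp.sublist.count_le _
      omega

lemma S_decomp {m n : ℕ} (hm : n + 1 ≤ m) (j : ℕ) :
    S m (n + 1) (j + 1) =
      (fun w => w ++ [true]) '' S m n (j + 1) ∪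
      (fun w => w ++ [false]) '' S m (n + 2) j := by
  ext w
  constructor
  · intro hw
    have hne : w ≠ [] := by
      intro h0
      have := hw.2.1
      rw [h0] at this
      simp only [List.length_nil] at this
      omega
    obtain ⟨u, b, rfl⟩ : ∃ u b, w = u ++ [b] := by
      rcases w.eq_nil_or_concat with h0 | ⟨u, b, h0⟩
      · exact absurd h0 hne
      · exact ⟨u, b, by simpa using h0⟩
    cases b
    · exact Or.inr ⟨u, concat_false_mem.1 hw, rfl⟩
    · exact Or.inl ⟨u, (concat_true_mem hm).1 hw, rfl⟩
  · rintro (⟨u, hu, rfl⟩ | ⟨u, hu, rfl⟩)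
    · exact (concat_true_mem hm).2 hu
    · exact concat_false_mem.2 hu

lemma S_decomp0 {m : ℕ} (j : ℕ) :
    S m 0 (j + 1) = (fun w => w ++ [false]) '' S m 1 j := by
  ext w
  constructor
  · intro hw
    have hne : w ≠ [] := by
      intro h0
      have := hw.2.1
      rw [h0] at this
      simp only [List.length_nil] at this
      omega
    obtain ⟨u, b, rfl⟩ : ∃ u b, w = u ++ [b] := by
      rcases w.eq_nil_or_concat with h0 | ⟨u, b, h0⟩
      · exact absurd h0 hne
      · exact ⟨u, b, by simpa using h0⟩
    cases b
    · exact ⟨u, concat_false_mem.1 hw, rfl⟩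
    · exfalso
      obtain ⟨hd, hl, he, hb⟩ := hw
      have h1 : u.count false ≤ u.count true := hd u (List.prefix_append _ _)
      unfold EndsAt at he
      simp at he
      omega
  · rintro ⟨u, hu, rfl⟩
    exact concat_false_mem.2 hu

lemma concat_injOn (b : Bool) (s : Set (List Bool)) :
    Set.InjOn (fun w => w ++ [b]) s := fun a _ c _ h => by simpa using h

lemma card_step {m n : ℕ} (hm : n + 1 ≤ m) (j : ℕ) :
    (S m (n + 1) (j + 1)).ncard = (S m n (j + 1)).ncard + (S m (n + 2) j).ncard := by
  have hdisj : Disjoint ((fun w => w ++ [true]) '' S m n (j + 1))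
      ((fun w => w ++ [false]) '' S m (n + 2) j) := by
    rw [Set.disjoint_left]
    rintro a ⟨x, _, rfl⟩ ⟨y, _, hy⟩
    have hy' : y ++ [false] = x ++ [true] := hy
    have h1 : (x ++ [true]).getLast? = some true := List.getLast?_concat
    rw [← hy', List.getLast?_concat] at h1
    simp at h1
  rw [S_decomp hm j,
    Set.ncard_union_eq hdisj ((S_finite _ _ _).image _) ((S_finite _ _ _).image _),
    Set.ncard_image_of_injOn (concat_injOn _ _), Set.ncard_image_of_injOn (concat_injOn _ _)]

lemma card_step0 (m j : ℕ) :
    (S m 0 (j + 1)).ncard = (S m 1 j).ncard := by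
  rw [S_decomp0 j, Set.ncard_image_of_injOn (concat_injOn _ _)]

lemma G_top {m n : ℕ} (h : m < n) : G m n = 0 := by
  ext j
  rw [coeff_G, S_empty h]
  simp

lemma G_step {m n : ℕ} (hm : n + 1 ≤ m) :
    G m (n + 1) = G m n + X * G m (n + 2) := by
  ext j
  rw [map_add, coeff_G]
  cases j with
  | zero =>
    rw [coeff_G]
    simp only [PowerSeries.coeff_zero_eq_constantCoeff, map_mul, constantCoeff_X, zero_mul,
      add_zero]
    rw [S_card_zero (by omega : n + 1 ≤ m), S_card_zero (by omega : n ≤ m)]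
    simp
  | succ j =>
    rw [PowerSeries.coeff_succ_X_mul, coeff_G, coeff_G, card_step hm j]
    push_cast
    ring

lemma G_zero (m : ℕ) : G m 0 = 1 + X * G m 1 := by
  ext j
  rw [map_add, coeff_G]
  cases j with
  | zero =>
    simp only [PowerSeries.coeff_zero_eq_constantCoeff, map_mul, constantCoeff_X, zero_mul,
      add_zero, map_one]
    rw [S_card_zero (Nat.zero_le m)]
    simp
  | succ j =>
    rw [PowerSeries.coeff_succ_X_mul, coeff_G, card_step0 m j, PowerSeries.coeff_one]
    simp

lemma coeff_p (k s : ℕ) :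
    PowerSeries.coeff s (pSeries k) = (-1) ^ s * ((k - s).choose s : ℤ) := by
  rw [pSeries, PowerSeries.coeff_mk]
  split_ifs with h
  · rfl
  · have h2 : k - s < s := by omega
    rw [Nat.choose_eq_zero_of_lt h2]
    simp

lemma p_zero : pSeries 0 = 1 := by
  ext s
  rw [coeff_p, PowerSeries.coeff_one]
  cases s with
  | zero => simp
  | succ s => simp [Nat.choose_eq_zero_of_lt]

lemma p_one : pSeries 1 = 1 := by
  ext s
  rw [coeff_p, PowerSeries.coeff_one]
  cases s with
  | zero => simp
  | succ s =>
    have h1 : 1 - (s + 1) < s + 1 := by omega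
    rw [Nat.choose_eq_zero_of_lt h1]
    simp

lemma p_rec (k : ℕ) : pSeries (k + 2) = pSeries (k + 1) - X * pSeries k := by
  ext s
  rw [map_sub, coeff_p, coeff_p]
  cases s with
  | zero => simp
  | succ s =>
    rw [PowerSeries.coeff_succ_X_mul, coeff_p]
    have key : (k + 2 - (s + 1)).choose (s + 1) =
        (k + 1 - (s + 1)).choose (s + 1) + (k - s).choose s := by
      rcases le_or_gt (s + 1) (k + 1) with hs | hs
      · have h1 : k + 2 - (s + 1) = (k + 1 - (s + 1)) + 1 := by omega
        have h2 : k - s = k + 1 - (s + 1) := by omega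
        rw [h1, h2, Nat.choose_succ_succ']
        omega
      · have h2 : k + 1 - (s + 1) = 0 := by omega
        have h3 : k - s < s := by omega
        rw [h2, Nat.choose_eq_zero_of_lt (by omega : k + 2 - (s + 1) < s + 1),
          Nat.choose_eq_zero_of_lt (by omega : (0:ℕ) < s + 1),
          Nat.choose_eq_zero_of_lt h3]
    rw [key]
    push_cast
    ring

lemma p_ne_zero (k : ℕ) : pSeries k ≠ 0 := by
  intro h
  have h1 : PowerSeries.coeff 0 (pSeries k) = (-1 : ℤ) ^ 0 * ((k - 0).choose 0 : ℤ) :=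
    coeff_p k 0
  rw [h] at h1
  simp at h1

/-- Key downward recursion: `G m t * p_{m+1} = p_k * (G m m * p_{m+1})` when `m = k + t`. -/
lemma aux (m : ℕ) : ∀ k t : ℕ, m = k + t →
    G m t * pSeries (m + 1) = pSeries k * (G m m * pSeries (m + 1)) := by
  intro k
  induction k using Nat.twoStepInduction with
  | zero =>
    intro t ht
    have h0 : t = m := by omega
    subst h0
    rw [p_zero, one_mul]
  | one =>
    intro t ht
    have hm : t + 1 = m := by omega
    subst hm
    have hstep := G_step (m := t + 1) (n := t) (by omega)
    have htop : G (t + 1) (t + 2) = 0 := G_top (by omega)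
    rw [htop, mul_zero, add_zero] at hstep
    rw [p_one, one_mul, ← hstep]
  | more k ih ih1 =>
    intro t ht
    have h2 := ih (t + 2) (by omega)
    have h1 := ih1 (t + 1) (by omega)
    have hstep := G_step (m := m) (n := t) (by omega)
    have hrec := p_rec k
    have hmul : G m (t + 1) * pSeries (m + 1) =
        G m t * pSeries (m + 1) + X * (G m (t + 2) * pSeries (m + 1)) := by
      rw [hstep]; ring
    rw [h1, h2] at hmul
    rw [hrec]
    linear_combination -hmul

lemma hE (m : ℕ) : G m m * pSeries (m + 1) = 1 := by
  cases m with
  | zero =>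
    have h0 : G 0 0 = 1 := by
      rw [G_zero 0, G_top (by omega : (0:ℕ) < 1), mul_zero, add_zero]
    rw [h0, p_one, one_mul]
  | succ m' =>
    have ha : G (m' + 1) 0 * pSeries (m' + 2) =
        pSeries (m' + 1) * (G (m' + 1) (m' + 1) * pSeries (m' + 2)) :=
      aux (m' + 1) (m' + 1) 0 (by omega)
    have hb : G (m' + 1) 1 * pSeries (m' + 2) =
        pSeries m' * (G (m' + 1) (m' + 1) * pSeries (m' + 2)) :=
      aux (m' + 1) m' 1 (by omega)
    have hz := G_zero (m' + 1)
    have hrec := p_rec m'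
    have hc : G (m' + 1) 0 * pSeries (m' + 2) =
        pSeries (m' + 2) + X * (G (m' + 1) 1 * pSeries (m' + 2)) := by
      rw [hz]; ring
    rw [ha, hb] at hc
    have hfac : pSeries (m' + 2) * (G (m' + 1) (m' + 1) * pSeries (m' + 2) - 1) = 0 := by
      linear_combination hc + (G (m' + 1) (m' + 1) * pSeries (m' + 2)) * hrec
    rcases mul_eq_zero.1 hfac with hf | hf
    · exact absurd hf (p_ne_zero _)
    · show G (m' + 1) (m' + 1) * pSeries (m' + 2) = 1
      linear_combination hf

end Stmt7Aux

/-- For 0 ≤ n ≤ m, `G_n^m(x) · p_{m+1}(x) = p_{m-n}(x)`. -/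
theorem stmt7 (m n : ℕ) (h : n ≤ m) :
    G m n * pSeries (m + 1) = pSeries (m - n) := by
  have key := Stmt7Aux.aux m (m - n) n (by omega)
  rw [Stmt7Aux.hE, mul_one] at key
  exact key
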